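/- Let G be a finite group, p a prime, P a p-subgroup of G, and g ∈ G an element of order coprime to p that normalizes P. If g has a right Engel sink of cardinality at most m, then the subgroup [P,g] generated by all commutators [v,g] with v ∈ P is nilpotent of nilpotency class at most 2m + 1. -/

import Mathlib

/-- The commutator `[a,b] = a⁻¹ b⁻¹ a b`. -/
def cmtr {G : Type*} [Group G] (a b : G) : G := a⁻¹ * b⁻¹ * a * b

/-- `engel a b n` is the left-normed Engel commutator `[a,_n b] = [[...[[a,b],b],...],b]`
with `b` repeated `n` times. -/
def engel {G : Type*} [Group G] (a b : G) : ℕ → G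
  | 0 => a
  | n + 1 => cmtr (engel a b n) b

/-- A finite subset `R` of `G` is a right Engel sink for `g` if for every `x ∈ G` there is a
positive integer `n₀` such that `[g,_n x] ∈ R` for all `n ≥ n₀`. -/
def IsRightEngelSink {G : Type*} [Group G] (g : G) (R : Set G) : Prop :=
  R.Finite ∧ ∀ x : G, ∃ n₀ : ℕ, 0 < n₀ ∧ ∀ n ≥ n₀, engel g x n ∈ R

/-- A finite subset `E` of `G` is a left Engel sink for `g` if for every `x ∈ G` there is a
positive integer `n₀` such that `[x,_n g] ∈ E` for all `n ≥ n₀`. -/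
def IsLeftEngelSink {G : Type*} [Group G] (g : G) (E : Set G) : Prop :=
  E.Finite ∧ ∀ x : G, ∃ n₀ : ℕ, 0 < n₀ ∧ ∀ n ≥ n₀, engel x g n ∈ E

/-- An element is almost right Engel if it admits a finite right Engel sink. -/
def AlmostRightEngel {G : Type*} [Group G] (g : G) : Prop :=
  ∃ R : Set G, IsRightEngelSink g R

/-- A group is locally nilpotent if every finitely generated subgroup is nilpotent. -/
def LocallyNilpotent (G : Type*) [Group G] : Prop :=
  ∀ H : Subgroup G, H.FG → Group.IsNilpotent H


section CommAbstract

variable {V : Type*} [CommGroup V] (Ab : V →* V)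

def seqprod (c : V) : ℕ → V
  | 0 => 1
  | k + 1 => seqprod c k * Ab^[k] c

def betaHom : V →* V :=
  MonoidHom.mk' (fun v => v⁻¹ * Ab v)
    (by intro a b; simp [mul_inv_rev, mul_comm, mul_left_comm, mul_assoc])

lemma betaHom_apply (v : V) : betaHom Ab v = v⁻¹ * Ab v := rfl

lemma seqprod_of_fixed {c : V} (hc : Ab c = c) (k : ℕ) : seqprod Ab c k = c ^ k := by
  induction k with
  | zero => simp [seqprod]
  | succ k ih => rw [seqprod, ih, Function.iterate_fixed hc, pow_succ]

lemma seqprod_telescope (u : V) (k : ℕ) :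
    seqprod Ab (betaHom Ab u) k = u⁻¹ * Ab^[k] u := by
  induction k with
  | zero => simp [seqprod]
  | succ k ih =>
      rw [seqprod, ih, betaHom_apply, iterate_map_mul, iterate_map_inv,
        Function.iterate_succ_apply Ab k u]
      group

lemma seqprod_succ' (c : V) (k : ℕ) :
    seqprod Ab c (k + 1) = c * Ab (seqprod Ab c k) := by
  induction k with
  | zero => simp [seqprod]
  | succ k ih =>
      calc seqprod Ab c (k+1+1) = seqprod Ab c (k+1) * Ab^[k+1] c := rfl
        _ = (c * Ab (seqprod Ab c k)) * Ab (Ab^[k] c) := by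
              rw [ih, Function.iterate_succ_apply' Ab k c]
        _ = c * Ab (seqprod Ab c k * Ab^[k] c) := by rw [map_mul, mul_assoc]
        _ = c * Ab (seqprod Ab c (k+1)) := rfl

lemma ki {t p : ℕ} (hcop : Nat.Coprime t p) (hAt : ∀ v : V, Ab^[t] v = v)
    (hord : ∀ v : V, ∃ k, v ^ p ^ k = 1) {v : V}
    (hv : v ∈ (betaHom Ab).range) (hfix : betaHom Ab v = 1) : v = 1 := by
  obtain ⟨u, rfl⟩ := hv
  have h1 : betaHom Ab u ^ t = 1 := by
    have hfix' : Ab (betaHom Ab u) = betaHom Ab u := by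
      have h := hfix
      rw [betaHom_apply (v := betaHom Ab u)] at h
      calc Ab (betaHom Ab u) = betaHom Ab u * ((betaHom Ab u)⁻¹ * Ab (betaHom Ab u)) := by group
        _ = betaHom Ab u := by rw [h, mul_one]
    rw [← seqprod_of_fixed Ab hfix' t, seqprod_telescope, hAt, inv_mul_cancel]
  obtain ⟨k, hk⟩ := hord (betaHom Ab u)
  have hd := Nat.dvd_gcd (orderOf_dvd_of_pow_eq_one h1) (orderOf_dvd_of_pow_eq_one hk)
  rw [Nat.Coprime.gcd_eq_one (hcop.pow_right k)] at hd
  exact orderOf_eq_one_iff.mp (Nat.eq_one_of_dvd_one hd)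

lemma range_iterate_sub (c : V) (k : ℕ) : Ab^[k] c * c⁻¹ ∈ (betaHom Ab).range := by
  induction k with
  | zero => simpa using ⟨1, map_one _⟩
  | succ k ih =>
      have hb : betaHom Ab (Ab^[k] c) = (Ab^[k] c)⁻¹ * Ab^[k+1] c := by
        rw [betaHom_apply, ← Function.iterate_succ_apply' Ab k c]
      have h1 : Ab^[k + 1] c * c⁻¹ = betaHom Ab (Ab^[k] c) * (Ab^[k] c * c⁻¹) := by
        rw [hb]; simp [mul_comm, mul_left_comm, mul_assoc]
      rw [h1]
      exact mul_mem ⟨_, rfl⟩ ih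

lemma kii {t p : ℕ} (hcop : Nat.Coprime t p)
    (hord : ∀ v : V, ∃ k, v ^ p ^ k = 1) {c : V}
    (h : seqprod Ab c t = 1) : c ∈ (betaHom Ab).range := by
  have claim : ∀ k, c ^ k * (seqprod Ab c k)⁻¹ ∈ (betaHom Ab).range := by
    intro k
    induction k with
    | zero => simpa [seqprod] using ⟨1, map_one _⟩
    | succ k ih =>
        have h1 : c ^ (k+1) * (seqprod Ab c (k+1))⁻¹
            = (c ^ k * (seqprod Ab c k)⁻¹) * (c * (Ab^[k] c)⁻¹) := by
          rw [seqprod, pow_succ, mul_inv_rev]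
          simp [mul_comm, mul_left_comm, mul_assoc]
        rw [h1]
        exact mul_mem ih (by simpa using ((betaHom Ab).range.inv_mem (range_iterate_sub Ab c k)))
  have h2 := claim t
  rw [h, inv_one, mul_one] at h2
  obtain ⟨k, hk⟩ := hord c
  have hcop' : Nat.Coprime t (p ^ k) := hcop.pow_right k
  have hb := Nat.gcd_eq_gcd_ab t (p ^ k)
  rw [hcop'] at hb
  have hc : c = (c ^ t) ^ Nat.gcdA t (p ^ k) * (c ^ p ^ k) ^ Nat.gcdB t (p ^ k) := by
    rw [← zpow_natCast c t, ← zpow_natCast c (p ^ k), ← zpow_mul, ← zpow_mul, ← zpow_add, ← hb]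
    norm_num
  rw [hc, hk]
  simpa using (betaHom Ab).range.zpow_mem h2 (Nat.gcdA t (p ^ k))

end CommAbstract
section QuotSetup

variable {G : Type*} [Group G]

def conjM (g : G) (M : Subgroup G) (hMg : ∀ a ∈ M, g⁻¹ * a * g ∈ M) : ↥M →* ↥M :=
  MonoidHom.mk' (fun a => ⟨g⁻¹ * a * g, hMg a a.2⟩)
    (by intro a b; ext; show g⁻¹ * (↑a * ↑b) * g = (g⁻¹ * ↑a * g) * (g⁻¹ * ↑b * g); group)

lemma conjM_apply (g : G) (M : Subgroup G) (hMg : ∀ a ∈ M, g⁻¹ * a * g ∈ M)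
    (a : ↥M) : (conjM g M hMg a : G) = g⁻¹ * a * g := rfl

lemma nsub_normal {M N : Subgroup G} (hNM' : ∀ u ∈ M, ∀ a ∈ N, u⁻¹ * a * u ∈ N) :
    (N.subgroupOf M).Normal := by
  constructor
  intro n hn m
  rw [Subgroup.mem_subgroupOf] at hn ⊢
  have := hNM' (↑m⁻¹) (M.inv_mem m.2) ↑n hn
  simpa using this

lemma conjM_iterate (g : G) (M : Subgroup G) (hMg : ∀ a ∈ M, g⁻¹ * a * g ∈ M)
    (k : ℕ) (a : ↥M) : ((conjM g M hMg)^[k] a : G) = (g ^ k)⁻¹ * a * g ^ k := by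
  induction k with
  | zero => simp
  | succ k ih =>
      rw [Function.iterate_succ_apply', conjM_apply, ih, pow_succ]
      group

end QuotSetup

section Main

variable {G : Type*} [Group G]

theorem stepA (g : G) (t p : ℕ) (ht : g ^ t = 1)
    (hcop : Nat.Coprime t p)
    (M N : Subgroup G)
    (hMg : ∀ a ∈ M, g⁻¹ * a * g ∈ M)
    (hNg : ∀ a ∈ N, g⁻¹ * a * g ∈ N)
    (hNM' : ∀ u ∈ M, ∀ a ∈ N, u⁻¹ * a * u ∈ N)
    (hcomm : ∀ a ∈ M, ∀ b ∈ M, cmtr a b ∈ N)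
    (hpgrp : ∀ a ∈ M, ∃ k, a ^ p ^ k = 1)
    (R : Set G) (hsink : ∀ x : G, ∃ n₀ : ℕ, 0 < n₀ ∧ ∀ n ≥ n₀, engel g x n ∈ R)
    (h₀ : G) (h₀M : h₀ ∈ M) (h₀n : cmtr h₀ g ∉ N) :
    ∃ r ∈ R, r ∈ M ∧ r ∉ N := by
  classical
  haveI : (N.subgroupOf M).Normal := nsub_normal hNM'
  let V := ↥M ⧸ N.subgroupOf M
  letI : CommGroup V :=
    { (inferInstance : Group V) with
      mul_comm := by
        intro x y
        refine QuotientGroup.induction_on x ?_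
        intro a
        refine QuotientGroup.induction_on y ?_
        intro b
        show QuotientGroup.mk a * QuotientGroup.mk b = QuotientGroup.mk b * QuotientGroup.mk a
        rw [← QuotientGroup.mk_mul, ← QuotientGroup.mk_mul, QuotientGroup.eq,
          Subgroup.mem_subgroupOf]
        have : (((a * b)⁻¹ * (b * a) : ↥M) : G) = cmtr (b : G) (a : G) := by
          simp [cmtr, mul_assoc]
        rw [this]
        exact hcomm _ b.2 _ a.2 }
  have hcomap : N.subgroupOf M ≤ (N.subgroupOf M).comap (conjM g M hMg) := by
    intro a ha
    rw [Subgroup.mem_subgroupOf] at ha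
    rw [Subgroup.mem_comap, Subgroup.mem_subgroupOf]
    exact hNg _ ha
  let Ab : V →* V := QuotientGroup.map _ _ (conjM g M hMg) hcomap
  have hAb_mk : ∀ (a : ↥M), Ab (QuotientGroup.mk a) = QuotientGroup.mk (conjM g M hMg a) :=
    fun a => rfl
  -- the recurrence
  set x := g * h₀ with hx
  have hxmem : ∀ w ∈ M, cmtr w x ∈ M := by
    intro w hw
    have h1 : cmtr w x = w⁻¹ * (h₀⁻¹ * (g⁻¹ * w * g) * h₀) := by
      simp [cmtr, hx]; group
    rw [h1]
    exact M.mul_mem (M.inv_mem hw)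
      (M.mul_mem (M.mul_mem (M.inv_mem h₀M) (hMg _ hw)) h₀M)
  have hrec : ∀ (w : G) (hw : w ∈ M),
      (QuotientGroup.mk (⟨cmtr w x, hxmem w hw⟩ : ↥M) : V)
        = betaHom Ab (QuotientGroup.mk (⟨w, hw⟩ : ↥M)) := by
    intro w hw
    rw [betaHom_apply, hAb_mk]
    show _ = QuotientGroup.mk ((⟨w, hw⟩ : ↥M)⁻¹ * conjM g M hMg ⟨w, hw⟩)
    rw [QuotientGroup.eq, Subgroup.mem_subgroupOf]
    have hval : ((((⟨cmtr w x, hxmem w hw⟩ : ↥M))⁻¹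
        * ((⟨w, hw⟩ : ↥M)⁻¹ * conjM g M hMg ⟨w, hw⟩) : ↥M) : G)
        = cmtr h₀ (g⁻¹ * w * g) := by
      simp only [Subgroup.coe_mul, InvMemClass.coe_inv, conjM_apply]
      simp only [cmtr, hx]
      group
    rw [hval]
    exact hcomm h₀ h₀M _ (hMg _ hw)
  -- base element
  have hw1 : engel g x 1 = (cmtr h₀ g)⁻¹ := by
    show cmtr g x = (cmtr h₀ g)⁻¹
    simp only [cmtr, hx]; group
  have hcm : cmtr h₀ g ∈ M := M.mul_mem (M.mul_mem (M.mul_mem (M.inv_mem h₀M)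
      (by simpa [mul_assoc] using hMg _ h₀M |> fun h => h)) h₀M) (by exact M.one_mem) |> fun _ => by
    have h2 : cmtr h₀ g = h₀⁻¹ * (g⁻¹ * h₀ * g) := by simp [cmtr, mul_assoc]
    rw [h2]; exact M.mul_mem (M.inv_mem h₀M) (hMg _ h₀M)
  have hmem1 : engel g x 1 ∈ M := by rw [hw1]; exact M.inv_mem hcm
  have hbase : (QuotientGroup.mk (⟨engel g x 1, hmem1⟩ : ↥M) : V)
      = (betaHom Ab (QuotientGroup.mk (⟨h₀, h₀M⟩ : ↥M)))⁻¹ := by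
    rw [betaHom_apply, hAb_mk, ← QuotientGroup.mk_inv]
    congr 1
    ext
    simp only [InvMemClass.coe_inv, Subgroup.coe_mul, conjM_apply, hw1]
    simp only [cmtr]; group
  -- the invariant
  have hinv : ∀ n : ℕ, ∃ hw : engel g x (n + 1) ∈ M,
      (QuotientGroup.mk (⟨engel g x (n + 1), hw⟩ : ↥M) : V) ∈ (betaHom Ab).range ∧
      (QuotientGroup.mk (⟨engel g x (n + 1), hw⟩ : ↥M) : V) ≠ 1 := by
    have hAt : ∀ v : V, Ab^[t] v = v := by
      intro v
      refine QuotientGroup.induction_on v ?_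
      intro a
      have hit : ∀ (k : ℕ) (b : ↥M), Ab^[k] (QuotientGroup.mk b) = QuotientGroup.mk
          ((conjM g M hMg)^[k] b) := by
        intro k
        induction k with
        | zero => intro b; rfl
        | succ k ih =>
            intro b
            rw [Function.iterate_succ_apply, Function.iterate_succ_apply, hAb_mk, ih]
      rw [hit t a]
      congr 1
      ext
      rw [conjM_iterate, ht]
      simp
    have hord : ∀ v : V, ∃ k, v ^ p ^ k = 1 := by
      intro v
      refine QuotientGroup.induction_on v ?_
      intro a
      obtain ⟨k, hk⟩ := hpgrp (a : G) a.2
      refine ⟨k, ?_⟩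
      rw [← QuotientGroup.mk_pow, show a ^ p ^ k = 1 by ext; simpa using hk]
      rfl
    intro n
    induction n with
    | zero =>
        refine ⟨hmem1, ?_, ?_⟩
        · rw [hbase]
          exact Subgroup.inv_mem _ ⟨_, rfl⟩
        · rw [hbase, ne_eq, inv_eq_one, betaHom_apply]
          intro hcon
          apply h₀n
          have : Ab (QuotientGroup.mk (⟨h₀, h₀M⟩ : ↥M)) = QuotientGroup.mk (⟨h₀, h₀M⟩ : ↥M) := by
            rw [← one_mul (Ab _), ← mul_inv_cancel (QuotientGroup.mk (⟨h₀, h₀M⟩ : ↥M) : V),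
              mul_assoc, hcon, mul_one]
          rw [hAb_mk] at this
          have h4 := (QuotientGroup.eq).mp this.symm
          rw [Subgroup.mem_subgroupOf] at h4
          have h5 : (((⟨h₀, h₀M⟩ : ↥M)⁻¹ * conjM g M hMg ⟨h₀, h₀M⟩ : ↥M) : G) = cmtr h₀ g := by
            simp only [Subgroup.coe_mul, InvMemClass.coe_inv, conjM_apply, cmtr]
            group
          rwa [h5] at h4
    | succ n ih =>
        obtain ⟨hw, hrange, hne⟩ := ih
        have hw' : engel g x (n + 2) ∈ M := hxmem _ hw
        refine ⟨hw', ?_, ?_⟩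
        · show (QuotientGroup.mk (⟨cmtr (engel g x (n+1)) x, hw'⟩ : ↥M) : V) ∈ _
          rw [hrec _ hw]
          exact ⟨_, rfl⟩
        · show (QuotientGroup.mk (⟨cmtr (engel g x (n+1)) x, hw'⟩ : ↥M) : V) ≠ 1
          rw [hrec _ hw]
          intro hcon
          exact hne (ki Ab hcop hAt hord hrange hcon)
  -- conclude via the sink
  obtain ⟨n₀, hn₀pos, hn₀⟩ := hsink x
  obtain ⟨n₁, rfl⟩ : ∃ n₁, n₀ = n₁ + 1 := ⟨n₀ - 1, (Nat.succ_pred_eq_of_pos hn₀pos).symm⟩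
  obtain ⟨hw, _, hne⟩ := hinv n₁
  refine ⟨engel g x (n₁ + 1), hn₀ _ le_rfl, hw, ?_⟩
  intro hmemN
  apply hne
  rw [QuotientGroup.eq_one_iff, Subgroup.mem_subgroupOf]
  exact hmemN

theorem chainLem (g : G) (t p : ℕ) (ht : g ^ t = 1)
    (hcop : Nat.Coprime t p)
    (M N : Subgroup G)
    (hMg : ∀ a ∈ M, g⁻¹ * a * g ∈ M)
    (hNg : ∀ a ∈ N, g⁻¹ * a * g ∈ N)
    (hNM' : ∀ u ∈ M, ∀ a ∈ N, u⁻¹ * a * u ∈ N)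
    (hcomm : ∀ a ∈ M, ∀ b ∈ M, cmtr a b ∈ N)
    (hpgrp : ∀ a ∈ M, ∃ k, a ^ p ^ k = 1)
    (c : G) (hc : c ∈ M) (f : ℕ → G) (hf0 : f 0 = 1) (hfm : ∀ k, f k ∈ M)
    (hfs : ∀ k, f (k + 1) = c * (g⁻¹ * f k * g)) (hft : f t ∈ N) :
    ∃ w ∈ M, ∃ z ∈ N, c = cmtr w g * z := by
  classical
  haveI : (N.subgroupOf M).Normal := nsub_normal hNM'
  let V := ↥M ⧸ N.subgroupOf M
  letI : CommGroup V :=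
    { (inferInstance : Group V) with
      mul_comm := by
        intro x y
        refine QuotientGroup.induction_on x ?_
        intro a
        refine QuotientGroup.induction_on y ?_
        intro b
        show QuotientGroup.mk a * QuotientGroup.mk b = QuotientGroup.mk b * QuotientGroup.mk a
        rw [← QuotientGroup.mk_mul, ← QuotientGroup.mk_mul, QuotientGroup.eq,
          Subgroup.mem_subgroupOf]
        have : (((a * b)⁻¹ * (b * a) : ↥M) : G) = cmtr (b : G) (a : G) := by
          simp [cmtr, mul_assoc]
        rw [this]
        exact hcomm _ b.2 _ a.2 }
  have hcomap : N.subgroupOf M ≤ (N.subgroupOf M).comap (conjM g M hMg) := by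
    intro a ha
    rw [Subgroup.mem_subgroupOf] at ha
    rw [Subgroup.mem_comap, Subgroup.mem_subgroupOf]
    exact hNg _ ha
  let Ab : V →* V := QuotientGroup.map _ _ (conjM g M hMg) hcomap
  have hAb_mk : ∀ (a : ↥M), Ab (QuotientGroup.mk a) = QuotientGroup.mk (conjM g M hMg a) :=
    fun a => rfl
  have hord : ∀ v : V, ∃ k, v ^ p ^ k = 1 := by
    intro v
    refine QuotientGroup.induction_on v ?_
    intro a
    obtain ⟨k, hk⟩ := hpgrp (a : G) a.2
    refine ⟨k, ?_⟩
    rw [← QuotientGroup.mk_pow, show a ^ p ^ k = 1 by ext; simpa using hk]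
    rfl
  -- the image of the chain is seqprod
  have hchain : ∀ k : ℕ, (QuotientGroup.mk (⟨f k, hfm k⟩ : ↥M) : V)
      = seqprod Ab (QuotientGroup.mk (⟨c, hc⟩ : ↥M)) k := by
    intro k
    induction k with
    | zero =>
        rw [show seqprod Ab (QuotientGroup.mk (⟨c, hc⟩ : ↥M) : V) 0 = 1 from rfl]
        rw [show (1 : V) = QuotientGroup.mk 1 from rfl]
        congr 1
        ext
        simp [hf0]
    | succ k ih =>
        rw [seqprod_succ', ← ih, hAb_mk, ← QuotientGroup.mk_mul]
        congr 1
        ext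
        simp only [Subgroup.coe_mul, conjM_apply, hfs k]
  -- apply kii
  have hft' : seqprod Ab (QuotientGroup.mk (⟨c, hc⟩ : ↥M) : V) t = 1 := by
    rw [← hchain t, QuotientGroup.eq_one_iff, Subgroup.mem_subgroupOf]
    exact hft
  obtain ⟨u, hu⟩ := kii Ab hcop hord hft'
  obtain ⟨w, rfl⟩ := QuotientGroup.mk_surjective u
  rw [betaHom_apply, hAb_mk, ← QuotientGroup.mk_inv, ← QuotientGroup.mk_mul] at hu
  have h4 := (QuotientGroup.eq).mp hu
  rw [Subgroup.mem_subgroupOf] at h4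
  refine ⟨(w : G), w.2, _, h4, ?_⟩
  simp only [Subgroup.coe_mul, InvMemClass.coe_inv, conjM_apply, cmtr]
  group

end Main

open scoped commutatorElement

section ThreeSubgroups

variable {G : Type*} [Group G]

lemma cmtr_mem_commutator {A B : Subgroup G} {a b : G} (ha : a ∈ A) (hb : b ∈ B) :
    cmtr a b ∈ ⁅A, B⁆ := by
  have : cmtr a b = ⁅a⁻¹, b⁻¹⁆ := by simp [cmtr, commutatorElement_def]
  rw [this]
  exact Subgroup.commutator_mem_commutator (A.inv_mem ha) (B.inv_mem hb)

lemma hall_witt_cmtr (a b c : G) :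
    (b⁻¹ * cmtr (cmtr a b⁻¹) c * b) * (c⁻¹ * cmtr (cmtr b c⁻¹) a * c)
      * (a⁻¹ * cmtr (cmtr c a⁻¹) b * a) = 1 := by
  simp only [cmtr]
  group

lemma three_subgroups {H A B C N : Subgroup G} (hA : A ≤ H) (hB : B ≤ H) (hC : C ≤ H)
    (hN : ∀ u ∈ H, ∀ n ∈ N, u⁻¹ * n * u ∈ N)
    (h1 : ⁅⁅A, B⁆, C⁆ ≤ N) (h2 : ⁅⁅B, C⁆, A⁆ ≤ N) : ⁅⁅C, A⁆, B⁆ ≤ N := by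
  have hconj : ∀ u ∈ H, ∀ n ∈ N, u * n * u⁻¹ ∈ N := by
    intro u hu n hn
    simpa [mul_assoc] using hN u⁻¹ (H.inv_mem hu) n hn
  let T : Subgroup G :=
    { carrier := { x | x ∈ H ∧ ∀ b ∈ B, cmtr x b ∈ N }
      one_mem' := ⟨H.one_mem, fun b _ => by simp [cmtr, N.one_mem]⟩
      mul_mem' := by
        rintro x y ⟨hxH, hx⟩ ⟨hyH, hy⟩
        refine ⟨H.mul_mem hxH hyH, fun b hb => ?_⟩
        have hid : cmtr (x * y) b = (y⁻¹ * cmtr x b * y) * cmtr y b := by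
          simp only [cmtr]; group
        rw [hid]
        exact N.mul_mem (hN y hyH _ (hx b hb)) (hy b hb)
      inv_mem' := by
        rintro x ⟨hxH, hx⟩
        refine ⟨H.inv_mem hxH, fun b hb => ?_⟩
        have hid : cmtr x⁻¹ b = x * (cmtr x b)⁻¹ * x⁻¹ := by
          simp only [cmtr]; group
        rw [hid]
        exact hconj x hxH _ (N.inv_mem (hx b hb)) }
  have key : ∀ c ∈ C, ∀ a ∈ A, ∀ b ∈ B, cmtr (cmtr c a⁻¹) b ∈ N := by
    intro c hc a ha b hb
    have hw := hall_witt_cmtr a b c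
    have hP1 : b⁻¹ * cmtr (cmtr a b⁻¹) c * b ∈ N :=
      hN b (hB hb) _ (h1 (cmtr_mem_commutator (cmtr_mem_commutator ha (B.inv_mem hb)) hc))
    have hP2 : c⁻¹ * cmtr (cmtr b c⁻¹) a * c ∈ N :=
      hN c (hC hc) _ (h2 (cmtr_mem_commutator (cmtr_mem_commutator hb (C.inv_mem hc)) ha))
    have hP3 : a⁻¹ * cmtr (cmtr c a⁻¹) b * a =
        ((b⁻¹ * cmtr (cmtr a b⁻¹) c * b) * (c⁻¹ * cmtr (cmtr b c⁻¹) a * c))⁻¹ := by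
      exact eq_inv_of_mul_eq_one_right hw
    have hP3' : a⁻¹ * cmtr (cmtr c a⁻¹) b * a ∈ N := by
      rw [hP3]; exact N.inv_mem (N.mul_mem hP1 hP2)
    have := hconj a (hA ha) _ hP3'
    simpa [mul_assoc] using this
  have hgen : ∀ c ∈ C, ∀ a ∈ A, ⁅c, a⁆ ∈ T := by
    intro c hc a ha
    have hmemH : ⁅c, a⁆ ∈ H := H.mul_mem (H.mul_mem (H.mul_mem (hC hc) (hA ha))
      (H.inv_mem (hC hc))) (H.inv_mem (hA ha))
    refine ⟨hmemH, fun b hb => ?_⟩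
    have heq : ⁅c, a⁆ = cmtr c⁻¹ a⁻¹ := by simp [cmtr, commutatorElement_def]
    rw [heq]
    have := key c⁻¹ (C.inv_mem hc) a (hA (A.inv_mem (A.inv_mem ha)) |> fun _ => ha) b hb
    simpa using this
  have hCA : ⁅C, A⁆ ≤ T := Subgroup.commutator_le.mpr hgen
  rw [Subgroup.commutator_le]
  intro x hx b hb
  have heq : ⁅x, b⁆ = cmtr x⁻¹ b⁻¹ := by simp [cmtr, commutatorElement_def]
  rw [heq]
  exact (T.inv_mem (hCA hx) |> fun h => h).2 b⁻¹ (B.inv_mem hb)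

end ThreeSubgroups

section MainTheorem

lemma cmtr_pow_succ {G : Type*} [Group G] (v b : G) (k : ℕ) :
    cmtr v (b ^ (k + 1)) = cmtr v b * (b⁻¹ * cmtr v (b ^ k) * b) := by
  simp only [cmtr, pow_succ]
  group

lemma cmtr_inv_right {G : Type*} [Group G] (b a : G) :
    cmtr a b⁻¹ = (cmtr (b * a * b⁻¹) b)⁻¹ := by
  simp only [cmtr]; group

lemma cmtr_mul_right {G : Type*} [Group G] (a b c : G) :
    cmtr a (b * c) = cmtr a c * (c⁻¹ * cmtr a b * c) := by
  simp only [cmtr]; group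

lemma bezout_pow_mem' {G : Type*} [Group G] {t p : ℕ} (hcop : Nat.Coprime t p)
    (K : Subgroup G) (v : G) (hvt : v ^ t ∈ K) (hv : ∃ k, v ^ p ^ k = 1) : v ∈ K := by
  obtain ⟨k, hk⟩ := hv
  have hcop' : Nat.Coprime t (p ^ k) := hcop.pow_right k
  have hb := Nat.gcd_eq_gcd_ab t (p ^ k)
  rw [hcop'] at hb
  have hc : v = (v ^ t) ^ Nat.gcdA t (p ^ k) * (v ^ p ^ k) ^ Nat.gcdB t (p ^ k) := by
    rw [← zpow_natCast v t, ← zpow_natCast v (p ^ k), ← zpow_mul, ← zpow_mul, ← zpow_add, ← hb]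
    norm_num
  rw [hc, hk]
  simpa using K.zpow_mem hvt (Nat.gcdA t (p ^ k))

lemma cmtr_conj {G : Type*} [Group G] (a x w : G) :
    cmtr a (w⁻¹ * x * w) = w⁻¹ * cmtr (w * a * w⁻¹) x * w := by
  simp only [cmtr]; group

lemma commutatorElement_eq_cmtr {G : Type*} [Group G] (x y : G) :
    ⁅x, y⁆ = cmtr x⁻¹ y⁻¹ := by
  simp [cmtr, commutatorElement_def]

theorem commutator_with_p_subgroup_nilpotency_class {G : Type*} [Group G] [Finite G]
    (p : ℕ) (hp : p.Prime) (P : Subgroup G) (hP : IsPGroup p P)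
    (g : G) (hcop : Nat.Coprime (orderOf g) p) (hnorm : ∀ v ∈ P, g⁻¹ * v * g ∈ P)
    (m : ℕ) (hsink : ∃ R : Finset G, R.card ≤ m ∧ IsRightEngelSink g ↑R) :
    lowerCentralSeries (Subgroup.closure {z : G | ∃ v ∈ P, z = cmtr v g}) (2 * m + 1)
      = ⊥ := by
  classical
  obtain ⟨R, hRcard, hRfin, hRsink⟩ := hsink
  set S : Set G := {z : G | ∃ v ∈ P, z = cmtr v g} with hSdef
  set H : Subgroup G := Subgroup.closure S with hHdef
  set t : ℕ := orderOf g with htdef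
  have ht : g ^ t = 1 := pow_orderOf_eq_one g
  have ht0 : 0 < t := orderOf_pos g
  -- P is invariant under conjugation by g from both sides
  have hPpow : ∀ k : ℕ, ∀ v ∈ P, (g ^ k)⁻¹ * v * g ^ k ∈ P := by
    intro k
    induction k with
    | zero => intro v hv; simpa using hv
    | succ k ih =>
        intro v hv
        have h1 : (g ^ (k+1))⁻¹ * v * g ^ (k+1) = g⁻¹ * ((g ^ k)⁻¹ * v * g ^ k) * g := by
          rw [pow_succ]; group
        rw [h1]
        exact hnorm _ (ih v hv)
  have hginv : g ^ (t - 1) = g⁻¹ := by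
    have : g ^ (t - 1) * g = 1 := by
      rw [← pow_succ, Nat.sub_add_cancel ht0, ht]
    exact eq_inv_of_mul_eq_one_left this
  have hPg' : ∀ v ∈ P, g * v * g⁻¹ ∈ P := by
    intro v hv
    have := hPpow (t - 1) v hv
    rwa [hginv, inv_inv] at this
  -- S is closed under conjugation by g and g⁻¹
  have hconjS : ∀ z ∈ S, g⁻¹ * z * g ∈ S := by
    rintro z ⟨v, hv, rfl⟩
    refine ⟨g⁻¹ * v * g, hnorm v hv, ?_⟩
    simp only [cmtr]; group
  have hconjS' : ∀ z ∈ S, g * z * g⁻¹ ∈ S := by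
    rintro z ⟨v, hv, rfl⟩
    refine ⟨g * v * g⁻¹, hPg' v hv, ?_⟩
    simp only [cmtr]; group
  -- H ≤ P
  have hSP : S ⊆ (P : Set G) := by
    rintro z ⟨v, hv, rfl⟩
    have h1 : cmtr v g = v⁻¹ * (g⁻¹ * v * g) := by simp [cmtr, mul_assoc]
    rw [h1]
    exact P.mul_mem (P.inv_mem hv) (hnorm v hv)
  have hHP : H ≤ P := (Subgroup.closure_le P).mpr hSP
  -- H is invariant under conjugation by g (both sides), via images of S
  have hSimg : ∀ (c : G), (∀ z ∈ S, c⁻¹ * z * c ∈ S) → ∀ a ∈ H, c⁻¹ * a * c ∈ H := by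
    intro c hcS a ha
    refine Subgroup.closure_induction ?_ ?_ ?_ ?_ ha
    · intro x hx
      exact Subgroup.subset_closure (hcS x hx)
    · simpa using H.one_mem
    · intro x y _ _ hx hy
      have h1 : c⁻¹ * (x * y) * c = (c⁻¹ * x * c) * (c⁻¹ * y * c) := by group
      rw [h1]; exact H.mul_mem hx hy
    · intro x _ hx
      have h1 : c⁻¹ * x⁻¹ * c = (c⁻¹ * x * c)⁻¹ := by group
      rw [h1]; exact H.inv_mem hx
  have hHg : ∀ a ∈ H, g⁻¹ * a * g ∈ H := hSimg g hconjS
  have hHg' : ∀ a ∈ H, g * a * g⁻¹ ∈ H := by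
    intro a ha
    have := hSimg g⁻¹ (by simpa using hconjS') a ha
    simpa using this
  -- the series D
  set D : ℕ → Subgroup G := fun n => (lowerCentralSeries (⊤ : Subgroup ↥H) n).map H.subtype with hDdef
  have hD0 : D 0 = H := by
    show (⊤ : Subgroup ↥H).map H.subtype = H
    rw [← MonoidHom.range_eq_map, Subgroup.range_subtype]
  have hDsucc : ∀ n, D (n + 1) = ⁅D n, H⁆ := by
    intro n
    show (⁅lowerCentralSeries (⊤ : Subgroup ↥H) n, ⊤⁆ : Subgroup ↥H).map H.subtype = _
    rw [Subgroup.map_commutator, ← MonoidHom.range_eq_map, Subgroup.range_subtype]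
  have hDle : ∀ n, D n ≤ H := fun n => Subgroup.map_subtype_le _
  have hDH : ∀ n, ∀ u ∈ H, ∀ a ∈ D n, u⁻¹ * a * u ∈ D n := by
    intro n u hu a ha
    obtain ⟨a', ha', rfl⟩ := ha
    have hmem := Subgroup.Normal.conj_mem (Subgroup.lowerCentralSeries_normal (⊤ : Subgroup ↥H) n) a' ha' (⟨u, hu⟩ : ↥H)⁻¹
    refine ⟨(⟨u, hu⟩ : ↥H)⁻¹ * a' * (⟨u, hu⟩ : ↥H)⁻¹⁻¹, hmem, ?_⟩
    simp [Subgroup.coe_mul]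
  -- D is conj-g invariant
  have hHeq : H.map ((MulAut.conj g⁻¹).toMonoidHom) = H := by
    rw [hHdef, MonoidHom.map_closure]
    congr 1
    apply Set.eq_of_subset_of_subset
    · rintro _ ⟨z, hz, rfl⟩
      have := hconjS z hz
      simpa [MulAut.conj] using this
    · intro z hz
      refine ⟨g * z * g⁻¹, hconjS' z hz, ?_⟩
      simp only [MulEquiv.coe_toMonoidHom, MulAut.conj_apply]
      group
  have hDgmap : ∀ n, ∀ a ∈ D n, (g⁻¹ * a * g ∈ D n) ∧ (g * a * g⁻¹ ∈ D n) := by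
    have hmapeq : ∀ n, (D n).map ((MulAut.conj g⁻¹).toMonoidHom) = D n := by
      intro n
      induction n with
      | zero => rw [hD0]; exact hHeq
      | succ n ih =>
          rw [hDsucc n, Subgroup.map_commutator, ih, hHeq, ← hDsucc n]
    intro n a ha
    constructor
    · have : ((MulAut.conj g⁻¹).toMonoidHom) a ∈ (D n).map ((MulAut.conj g⁻¹).toMonoidHom) :=
        Subgroup.mem_map_of_mem _ ha
      rw [hmapeq n] at this
      simpa [MulAut.conj, mul_assoc] using this
    · have ha' : a ∈ (D n).map ((MulAut.conj g⁻¹).toMonoidHom) := by rw [hmapeq n]; exact ha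
      obtain ⟨b, hb, hba⟩ := ha'
      have : b = g * a * g⁻¹ := by
        simp only [MulEquiv.coe_toMonoidHom, MulAut.conj_apply] at hba
        rw [← hba]; group
      rwa [← this]
  have hDg : ∀ n, ∀ a ∈ D n, g⁻¹ * a * g ∈ D n := fun n a ha => (hDgmap n a ha).1
  have hDg' : ∀ n, ∀ a ∈ D n, g * a * g⁻¹ ∈ D n := fun n a ha => (hDgmap n a ha).2
  have hDstep : ∀ n, D (n+1) ≤ D n := by
    intro n
    rw [hDsucc n, Subgroup.commutator_le]
    intro a ha u hu
    have h1 : ⁅a, u⁆ = a * ((u⁻¹)⁻¹ * a⁻¹ * u⁻¹) := by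
      simp only [commutatorElement_def]; group
    rw [h1]
    exact (D n).mul_mem ha (hDH n u⁻¹ (H.inv_mem hu) a⁻¹ ((D n).inv_mem ha))
  have hmono' : ∀ i k, D (i + k) ≤ D i := by
    intro i k
    induction k with
    | zero => exact le_refl _
    | succ k ih => exact (hDstep (i+k)).trans ih
  have hmono : ∀ i j, i ≤ j → D j ≤ D i := by
    intro i j hij
    have := hmono' i (j - i)
    rwa [Nat.add_sub_cancel' hij] at this
  have hpgrpG : ∀ a ∈ H, ∃ k, a ^ p ^ k = 1 := by
    intro a ha
    obtain ⟨k, hk⟩ := hP ⟨a, hHP ha⟩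
    exact ⟨k, by simpa using congrArg (Subgroup.subtype P) hk⟩
  have hcmtrD : ∀ n, ∀ a ∈ D n, ∀ b ∈ H, cmtr a b ∈ D (n+1) := by
    intro n a ha b hb
    rw [hDsucc n]
    exact cmtr_mem_commutator ha hb
  -- gamma additivity
  have hgamma : ∀ j i, ⁅D i, D j⁆ ≤ D (i + j + 1) := by
    intro j
    induction j with
    | zero =>
        intro i
        rw [hD0]
        exact le_of_eq (hDsucc i).symm
    | succ j ih =>
        intro i
        have h1 : ⁅⁅H, D i⁆, D j⁆ ≤ D (i + j + 2) := by
          have e1 : ⁅H, D i⁆ = D (i+1) := by rw [Subgroup.commutator_comm, ← hDsucc i]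
          rw [e1]
          have h := ih (i+1)
          rwa [show i+1+j+1 = i+j+2 from by omega] at h
        have h2 : ⁅⁅D i, D j⁆, H⁆ ≤ D (i + j + 2) := by
          calc ⁅⁅D i, D j⁆, H⁆ ≤ ⁅D (i+j+1), H⁆ := Subgroup.commutator_mono (ih i) le_rfl
            _ = D (i+j+2) := (hDsucc _).symm
        have h3 := three_subgroups (H := H) (A := H) (B := D i) (C := D j)
          (N := D (i+j+2)) le_rfl (hDle i) (hDle j) (hDH (i+j+2)) h1 h2
        rw [hDsucc j, Subgroup.commutator_comm]
        exact h3
  -- every element of H is cmtr w g * z with z in D 1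
  have hcmtrH : ∀ w ∈ H, cmtr w g ∈ H := by
    intro w hw
    have h1 : cmtr w g = w⁻¹ * (g⁻¹ * w * g) := by simp [cmtr, mul_assoc]
    rw [h1]
    exact H.mul_mem (H.inv_mem hw) (hHg w hw)
  have b1 : ∀ u ∈ H, ∃ w ∈ H, ∃ z ∈ D 1, u = cmtr w g * z := by
    intro u hu
    rw [hHdef] at hu
    refine Subgroup.closure_induction ?_ ?_ ?_ ?_ hu
    · rintro x ⟨v, hv, rfl⟩
      have hvS : cmtr v g ∈ H := Subgroup.subset_closure ⟨v, hv, rfl⟩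
      have hfH : ∀ k, cmtr v (g ^ k) ∈ H := by
        intro k
        induction k with
        | zero => simpa [cmtr] using H.one_mem
        | succ k ih =>
            rw [cmtr_pow_succ]
            exact H.mul_mem hvS (hHg _ ih)
      exact chainLem g t p ht hcop H (D 1) hHg (hDg 1)
        (fun u' hu' a ha => hDH 1 u' hu' a ha)
        (fun a ha b hb => hcmtrD 0 a (by rw [hD0]; exact ha) b hb)
        hpgrpG (cmtr v g) hvS
        (fun k => cmtr v (g ^ k)) (by simp [cmtr]) hfH
        (fun k => cmtr_pow_succ v g k)
        (by show cmtr v (g ^ t) ∈ D 1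
            rw [ht]; simpa [cmtr] using (D 1).one_mem)
    · exact ⟨1, H.one_mem, 1, (D 1).one_mem, by simp [cmtr]⟩
    · rintro x y hxc hyc ⟨w1, hw1, z1, hz1, hx⟩ ⟨w2, hw2, z2, hz2, hy⟩
      have hc1H : cmtr w1 g ∈ H := hcmtrH w1 hw1
      have hd : cmtr (cmtr w1 g) w2 ∈ D 1 :=
        hcmtrD 0 _ (by rw [hD0]; exact hc1H) w2 hw2
      have hc2H : cmtr w2 g ∈ H := hcmtrH w2 hw2
      refine ⟨w1 * w2, H.mul_mem hw1 hw2,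
        ((cmtr w2 g)⁻¹ * (cmtr (cmtr w1 g) w2)⁻¹ * (cmtr w2 g))
          * ((cmtr w2 g)⁻¹ * z1 * (cmtr w2 g)) * z2, ?_, ?_⟩
      · refine (D 1).mul_mem ((D 1).mul_mem ?_ ?_) hz2
        · exact hDH 1 _ hc2H _ ((D 1).inv_mem hd)
        · exact hDH 1 _ hc2H _ hz1
      · rw [hx, hy]
        simp only [cmtr]
        group
    · rintro x hxc ⟨w, hw, z, hz, hx⟩
      have hcH : cmtr w⁻¹ g ∈ H := hcmtrH w⁻¹ (H.inv_mem hw)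
      have he : cmtr (cmtr w⁻¹ g) w ∈ D 1 :=
        hcmtrD 0 _ (by rw [hD0]; exact hcH) w hw
      refine ⟨w⁻¹, H.inv_mem hw,
        ((cmtr w⁻¹ g)⁻¹ * z⁻¹ * (cmtr w⁻¹ g)) * cmtr (cmtr w⁻¹ g) w, ?_, ?_⟩
      · exact (D 1).mul_mem (hDH 1 _ hcH _ ((D 1).inv_mem hz)) he
      · rw [hx]
        simp only [cmtr]
        group
  -- "very bad" : two consecutive bad levels kill the action on level i
  have hvbad : ∀ i, (∀ h ∈ D i, cmtr h g ∈ D (i+1)) → (∀ h ∈ D (i+1), cmtr h g ∈ D (i+2)) →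
      ∀ a ∈ D i, cmtr a g ∈ D (i + 2) := by
    intro i hbi hbi1 a ha
    have hyD : cmtr a g ∈ D (i+1) := hbi a ha
    have hyH : cmtr a g ∈ H := hDle _ hyD
    set y : G := cmtr a g with hydef
    have hfy : g⁻¹ * y * g = y * cmtr y g := by
      simp only [cmtr]; group
    have hstepy : ∀ k : ℕ, ∃ e ∈ D (i+2), g⁻¹ * y ^ k * g = y ^ k * e := by
      intro k
      induction k with
      | zero => exact ⟨1, (D (i+2)).one_mem, by simp⟩
      | succ k ih =>
          obtain ⟨e, he, heq⟩ := ih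
          have hf : cmtr y g ∈ D (i+2) := hbi1 y hyD
          refine ⟨(y⁻¹ * e * y) * cmtr y g,
            (D (i+2)).mul_mem (hDH (i+2) y hyH e he) hf, ?_⟩
          have h1 : g⁻¹ * y ^ (k+1) * g = (g⁻¹ * y ^ k * g) * (g⁻¹ * y * g) := by
            rw [pow_succ]; group
          rw [h1, heq, hfy]
          rw [pow_succ]
          group
    have hck : ∀ k : ℕ, ∃ e ∈ D (i+2), cmtr a (g ^ k) = y ^ k * e := by
      intro k
      induction k with
      | zero => exact ⟨1, (D (i+2)).one_mem, by simp [cmtr]⟩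
      | succ k ih =>
          obtain ⟨e, he, heq⟩ := ih
          obtain ⟨e', he', heq'⟩ := hstepy k
          refine ⟨e' * (g⁻¹ * e * g), (D (i+2)).mul_mem he' (hDg (i+2) e he), ?_⟩
          rw [cmtr_pow_succ, heq, ← hydef]
          have h2 : g⁻¹ * (y ^ k * e) * g = (g⁻¹ * y ^ k * g) * (g⁻¹ * e * g) := by group
          rw [h2, heq', pow_succ]
          group
    obtain ⟨e, he, heq⟩ := hck t
    have h1 : cmtr a (g ^ t) = 1 := by rw [ht]; simp [cmtr]
    rw [h1] at heq
    have hyt : y ^ t ∈ D (i+2) := by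
      have h3 : y ^ t = e⁻¹ := by
        rw [eq_inv_iff_mul_eq_one, ← heq]
      rw [h3]
      exact (D (i+2)).inv_mem he
    exact bezout_pow_mem' hcop (D (i+2)) y hyt (hpgrpG y hyH)
  -- collapse when two consecutive levels are bad
  have hcollapse : ∀ i, (∀ h ∈ D i, cmtr h g ∈ D (i+1)) →
      (∀ h ∈ D (i+1), cmtr h g ∈ D (i+2)) → D (i+1) ≤ D (i+2) := by
    intro i hbi hbi1
    have hkey : ∀ a ∈ D i, ∀ u ∈ H, cmtr a u ∈ D (i+2) := by
      intro a ha u hu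
      obtain ⟨w, hw, z, hz, rfl⟩ := b1 u hu
      rw [cmtr_mul_right]
      refine (D (i+2)).mul_mem ?_ ?_
      · exact hgamma 1 i (cmtr_mem_commutator ha hz)
      · refine hDH (i+2) z (hDle 1 hz) _ ?_
        have hsplit : cmtr w g = (w⁻¹ * g⁻¹ * w) * g := by
          simp [cmtr, mul_assoc]
        rw [hsplit, cmtr_mul_right]
        refine (D (i+2)).mul_mem (hvbad i hbi hbi1 a ha) ?_
        refine hDg (i+2) _ ?_
        have h2 : cmtr a (w⁻¹ * g⁻¹ * w) = w⁻¹ * cmtr (w * a * w⁻¹) g⁻¹ * w :=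
          cmtr_conj a g⁻¹ w
        rw [h2]
        have ha' : w * a * w⁻¹ ∈ D i := by
          have := hDH i w⁻¹ (H.inv_mem hw) a ha
          simpa using this
        refine hDH (i+2) w hw _ ?_
        rw [cmtr_inv_right]
        exact (D (i+2)).inv_mem (hvbad i hbi hbi1 _ (hDg' i _ ha'))
    rw [hDsucc i, Subgroup.commutator_le]
    intro a ha u hu
    rw [commutatorElement_eq_cmtr]
    exact hkey a⁻¹ ((D i).inv_mem ha) u⁻¹ (H.inv_mem hu)
  -- nilpotency
  haveI : Fact p.Prime := ⟨hp⟩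
  have hnilp : Group.IsNilpotent ↥H := (hP.to_le hHP).isNilpotent
  obtain ⟨nn, hnn⟩ := nilpotent_iff_lowerCentralSeries.mp hnilp
  have hDnn : D nn = ⊥ := by
    show (Subgroup.lowerCentralSeries (⊤ : Subgroup ↥H) nn).map H.subtype = ⊥
    rw [hnn]
    exact Subgroup.map_bot _
  have hstab : ∀ i, D i = D (i+1) → D i = ⊥ := by
    intro i hi
    have hchain : ∀ k, D (i + k) = D i := by
      intro k
      induction k with
      | zero => rfl
      | succ k ih =>
          rw [show i + (k+1) = (i + k) + 1 from rfl, hDsucc (i+k), ih, ← hDsucc i, ← hi]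
    rcases le_total i nn with h | h
    · have h2 := hchain (nn - i)
      rw [Nat.add_sub_cancel' h] at h2
      rw [← h2, hDnn]
    · exact le_bot_iff.mp ((hmono nn i h).trans (le_of_eq hDnn))
  -- final goal
  suffices hfin : D (2*m+1) = ⊥ by
    exact (Subgroup.top_subtype_lowerCentralSeries H _).symm.trans hfin
  by_contra hcon
  have hDne : ∀ i, i ≤ 2*m+1 → D i ≠ ⊥ := by
    intro i hi hbot
    exact hcon (le_bot_iff.mp ((hmono i (2*m+1) hi).trans (le_of_eq hbot)))
  -- step A applications
  have hA : ∀ i, ¬ (∀ h ∈ D i, cmtr h g ∈ D (i+1)) →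
      ∃ r, r ∈ (R : Set G) ∧ r ∈ D i ∧ r ∉ D (i+1) := by
    intro i hbad
    push_neg at hbad
    obtain ⟨h₀, h₀D, h₀n⟩ := hbad
    exact stepA g t p ht hcop (D i) (D (i+1)) (hDg i) (hDg (i+1))
      (fun u hu a ha => hDH (i+1) u (hDle i hu) a ha)
      (fun a ha b hb => hcmtrD i a ha b (hDle i hb))
      (fun a ha => hpgrpG a (hDle i ha)) (R : Set G) hRsink h₀ h₀D h₀n
  have hGood0 : ¬ (∀ h ∈ D 0, cmtr h g ∈ D 1) := by
    intro hbad
    have hle : H ≤ D 1 := by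
      intro u hu
      obtain ⟨w, hw, z, hz, rfl⟩ := b1 u hu
      exact (D 1).mul_mem (hbad w (by rw [hD0]; exact hw)) hz
    have hD01 : D 0 = D 1 := le_antisymm (by rw [hD0]; exact hle) (hDstep 0)
    exact hDne 0 (by omega) (hstab 0 hD01)
  have hGoodPair : ∀ j, 1 ≤ j → j ≤ m →
      ¬ (∀ h ∈ D (2*j-1), cmtr h g ∈ D (2*j-1+1)) ∨
      ¬ (∀ h ∈ D (2*j), cmtr h g ∈ D (2*j+1)) := by
    intro j hj1 hjm
    by_contra hc
    push_neg at hc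
    obtain ⟨hb1, hb2⟩ := hc
    have h2j : 2*j - 1 + 1 = 2*j := by omega
    have hb2' : ∀ h ∈ D (2*j-1+1), cmtr h g ∈ D (2*j-1+2) := by
      intro h hh
      have h2j' : 2*j - 1 + 2 = 2*j + 1 := by omega
      rw [h2j] at hh
      rw [h2j']
      exact hb2 h hh
    have hcol := hcollapse (2*j-1) hb1 hb2'
    have heq : D (2*j-1+1) = D (2*j-1+1+1) := le_antisymm hcol (hDstep _)
    exact hDne (2*j-1+1) (by omega) (hstab _ heq)
  -- index chooser
  set idx : ℕ → ℕ := fun j => if j = 0 then 0 else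
    (if ¬ (∀ h ∈ D (2*j-1), cmtr h g ∈ D (2*j-1+1)) then 2*j-1 else 2*j) with hidxdef
  have hidxgood : ∀ j, j ≤ m → ¬ (∀ h ∈ D (idx j), cmtr h g ∈ D (idx j + 1)) := by
    intro j hj
    by_cases h0 : j = 0
    · subst h0
      have h00 : idx 0 = 0 := by simp [hidxdef]
      rw [h00]
      exact hGood0
    · have hj1 : 1 ≤ j := Nat.one_le_iff_ne_zero.mpr h0
      by_cases hB : ¬ (∀ h ∈ D (2*j-1), cmtr h g ∈ D (2*j-1+1))
      · have heqi : idx j = 2*j-1 := by simp only [hidxdef]; rw [if_neg h0, if_pos hB]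
        rw [heqi]
        exact hB
      · have heqi : idx j = 2*j := by simp only [hidxdef]; rw [if_neg h0, if_neg hB]
        rw [heqi]
        rcases hGoodPair j hj1 hj with h | h
        · exact absurd h hB
        · exact h
  have hidxbounds : ∀ j, idx j ≤ 2*j ∧ (1 ≤ j → 2*j-1 ≤ idx j) := by
    intro j
    by_cases h0 : j = 0
    · subst h0
      have h00 : idx 0 = 0 := by simp [hidxdef]
      rw [h00]; omega
    · by_cases hB : ¬ (∀ h ∈ D (2*j-1), cmtr h g ∈ D (2*j-1+1))
      · have heqi : idx j = 2*j-1 := by simp only [hidxdef]; rw [if_neg h0, if_pos hB]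
        rw [heqi]; omega
      · have heqi : idx j = 2*j := by simp only [hidxdef]; rw [if_neg h0, if_neg hB]
        rw [heqi]; omega
  have hidxmono : ∀ j j', j < j' → idx j + 1 ≤ idx j' := by
    intro j j' hjj
    have h1 := (hidxbounds j).1
    have h2 := (hidxbounds j').2 (by omega)
    omega
  -- witnesses
  have hwit : ∀ j, ∃ r, (j ≤ m → (r ∈ (R : Set G) ∧ r ∈ D (idx j) ∧ r ∉ D (idx j + 1))) := by
    intro j
    by_cases hj : j ≤ m
    · obtain ⟨r, h⟩ := hA (idx j) (hidxgood j hj)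
      exact ⟨r, fun _ => h⟩
    · exact ⟨1, fun h => absurd h hj⟩
  choose F hF using hwit
  have hcard : m + 1 ≤ R.card := by
    have hinj : (Finset.range (m+1)).card ≤ R.card := by
      apply Finset.card_le_card_of_injOn F
      · intro j hj
        rw [Finset.mem_coe, Finset.mem_range] at hj
        have := (hF j (by omega)).1
        simpa using this
      · intro j hj j' hj' heq
        rw [Finset.coe_range, Set.mem_Iio] at hj hj'
        by_contra hne
        rcases Nat.lt_or_ge j j' with hlt | hge
        · have hj'm : j' ≤ m := by omega
          have hjm : j ≤ m := by omega
          have hmem := (hF j' hj'm).2.1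
          have : F j' ∈ D (idx j + 1) := hmono _ _ (hidxmono j j' hlt) hmem
          rw [← heq] at this
          exact (hF j hjm).2.2 this
        · have hlt : j' < j := by omega
          have hj'm : j' ≤ m := by omega
          have hjm : j ≤ m := by omega
          have hmem := (hF j hjm).2.1
          have : F j ∈ D (idx j' + 1) := hmono _ _ (hidxmono j' j hlt) hmem
          rw [heq] at this
          exact (hF j' hj'm).2.2 this
    simpa using hinj
  omega

end MainTheorem
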